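/- Any n×n board with c colours can be flooded in at most 2n + √(2c)·n + c Flood-It moves. -/
import Mathlib


/-- Tiles of an `n × n` board. -/
abbrev Tile (n : ℕ) := Fin n × Fin n

/-- Two tiles are adjacent if they differ by a unit step (horizontally or vertically). -/
def adjT {n : ℕ} (p q : Tile n) : Prop :=
  ((p.1 : ℤ) - (q.1 : ℤ)).natAbs + ((p.2 : ℤ) - (q.2 : ℤ)).natAbs = 1

/-- A board assigns one of `c` colours to each tile. -/
abbrev Board (n c : ℕ) := Tile n → Fin c

/-- `SameColorConn B p q` : `q` is in the monochromatic connected region of `B`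
containing `p`. -/
def SameColorConn {n c : ℕ} (B : Board n c) (p q : Tile n) : Prop :=
  Relation.ReflTransGen (fun a b => adjT a b ∧ B a = B b) p q

open Classical in
/-- A Flood-It move: recolour the monochromatic region containing `o` with colour `k`. -/
noncomputable def flood {n c : ℕ} (B : Board n c) (o : Tile n) (k : Fin c) : Board n c :=
  fun p => if SameColorConn B o p then k else B p

/-- Play a sequence of Flood-It moves (flooding from `o`). -/
noncomputable def playMoves {n c : ℕ} (o : Tile n) : Board n c → List (Fin c) → Board n c
  | B, [] => B
  | B, k :: ks => playMoves o (flood B o k) ks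

/-- A board is flooded when it is monochromatic. -/
def Flooded {n c : ℕ} (B : Board n c) : Prop := ∀ p q : Tile n, B p = B q

/-- `floodMoves B o` : the minimum number of moves (flooding from `o`) needed to
flood the board `B`. -/
noncomputable def floodMoves {n c : ℕ} (B : Board n c) (o : Tile n) : ℕ :=
  sInf {l : ℕ | ∃ ms : List (Fin c), ms.length = l ∧ Flooded (playMoves o B ms)}

section Aux

variable {n c : ℕ}

lemma adjT_horiz (i : Fin n) (a b : Fin n) (h : (a:ℕ) + 1 = b ∨ (b:ℕ) + 1 = a) :
    adjT (i, a) (i, b) := by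
  simp only [adjT]; omega

lemma adjT_vert (j : Fin n) (a b : Fin n) (h : (a:ℕ) + 1 = b ∨ (b:ℕ) + 1 = a) :
    adjT (a, j) (b, j) := by
  simp only [adjT]; omega

lemma scc_color {B : Board n c} {p q : Tile n} (h : SameColorConn B p q) : B p = B q := by
  induction h with
  | refl => rfl
  | tail _ hstep ih => exact ih.trans hstep.2

lemma scc_mono {B : Board n c} {o p : Tile n} (k : Fin c) (hp : SameColorConn B o p) :
    SameColorConn (flood B o k) o p := by
  induction hp with
  | refl => exact .refl
  | @tail b q hsteps hstep ih =>
      have hb : SameColorConn B o b := hsteps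
      have hq : SameColorConn B o q := hsteps.tail hstep
      exact ih.tail ⟨hstep.1, by simp [flood, hb, hq]⟩

lemma scc_absorb {B : Board n c} {o p q : Tile n} (hp : SameColorConn B o p) (hpq : adjT p q) :
    SameColorConn (flood B o (B q)) o q := by
  by_cases hq : SameColorConn B o q
  · exact scc_mono _ hq
  · exact (scc_mono _ hp).tail ⟨hpq, by simp [flood, hp, hq]⟩

lemma playMoves_append (o : Tile n) (B : Board n c) (ms ks : List (Fin c)) :
    playMoves o B (ms ++ ks) = playMoves o (playMoves o B ms) ks := by
  induction ms generalizing B with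
  | nil => rfl
  | cons k ms ih => simp only [List.cons_append, playMoves]; exact ih _

lemma scc_mono_play {B : Board n c} {o p : Tile n} (ms : List (Fin c))
    (hp : SameColorConn B o p) : SameColorConn (playMoves o B ms) o p := by
  induction ms generalizing B with
  | nil => exact hp
  | cons k ms ih => exact ih (scc_mono k hp)

lemma scc_cycle {o p q : Tile n} :
    ∀ (L : List (Fin c)) (B : Board n c), B q ∈ L → SameColorConn B o p → adjT p q →
      SameColorConn (playMoves o B L) o q := by
  intro L
  induction L with
  | nil => intro B h; simp at h
  | cons k ks ih =>
    intro B hmem hp hpq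
    show SameColorConn (playMoves o (flood B o k) ks) o q
    by_cases hk : k = B q
    · subst hk
      exact scc_mono_play ks (scc_absorb hp hpq)
    · by_cases hq : SameColorConn (flood B o k) o q
      · exact scc_mono_play ks hq
      · have hq0 : ¬ SameColorConn B o q := fun h0 => hq (scc_mono k h0)
        have hq' : flood B o k q = B q := by simp [flood, hq0]
        refine ih (flood B o k) ?_ (scc_mono k hp) hpq
        rw [hq']
        rcases List.mem_cons.mp hmem with h | h
        · exact absurd h.symm hk
        · exact h

/-- `q` is reachable from `p` in at most `d` adjacency steps. -/
def near : ℕ → Tile n → Tile n → Prop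
  | 0, p, q => p = q
  | d+1, p, q => p = q ∨ ∃ r, adjT p r ∧ near d r q

lemma near_refl : ∀ (d : ℕ) (p : Tile n), near d p p
  | 0, _ => rfl
  | _+1, _ => Or.inl rfl

lemma scc_ball (o : Tile n) (hc : 0 < c) :
    ∀ (d : ℕ) (B : Board n c), ∃ ms : List (Fin c), ms.length = d * c ∧
      ∀ q : Tile n, (∃ p, SameColorConn B o p ∧ near d p q) →
        SameColorConn (playMoves o B ms) o q := by
  intro d
  induction d with
  | zero =>
    intro B
    refine ⟨[], by simp, fun q ⟨p, hp, hq⟩ => ?_⟩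
    have hq' : p = q := hq
    exact hq' ▸ hp
  | succ d ih =>
    intro B
    obtain ⟨ms, hlen, hcov⟩ := ih (playMoves o B (List.finRange c))
    refine ⟨List.finRange c ++ ms, by simp [hlen, Nat.succ_mul, Nat.add_comm], ?_⟩
    rintro q ⟨p, hp, hnear⟩
    rw [playMoves_append]
    rcases (hnear : p = q ∨ ∃ r, adjT p r ∧ near d r q) with hq | ⟨r, hpr, hr⟩
    · exact hcov q ⟨q, hq ▸ scc_mono_play _ hp, near_refl d q⟩
    · exact hcov q ⟨r, scc_cycle (List.finRange c) B (List.mem_finRange _) hp hpr, hr⟩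

lemma near_vert : ∀ (d : ℕ) (j : Fin n) (a b : Fin n),
    ((a:ℕ) ≤ b ∧ (b:ℕ) - a ≤ d) ∨ ((b:ℕ) ≤ a ∧ (a:ℕ) - b ≤ d) → near d (a, j) (b, j) := by
  intro d
  induction d with
  | zero =>
    intro j a b h
    have : a = b := by apply Fin.ext; omega
    exact this ▸ near_refl 0 _
  | succ d ih =>
    intro j a b h
    by_cases hab : a = b
    · exact hab ▸ near_refl _ _
    · have hab' : (a:ℕ) ≠ (b:ℕ) := fun h' => hab (Fin.ext h')
      rcases h with ⟨h1, h2⟩ | ⟨h1, h2⟩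
      · -- go up: a < b
        have hlt : (a:ℕ) + 1 ≤ (b:ℕ) := by omega
        refine Or.inr ⟨(⟨(a:ℕ)+1, lt_of_le_of_lt hlt b.isLt⟩, j), adjT_vert j _ _ (Or.inl rfl), ?_⟩
        exact ih j _ b (Or.inl ⟨hlt, by simp; omega⟩)
      · -- go down: b < a
        have hlt : (b:ℕ) + 1 ≤ (a:ℕ) := by omega
        have hpos : (a:ℕ) - 1 < n := by omega
        refine Or.inr ⟨(⟨(a:ℕ)-1, hpos⟩, j), adjT_vert j _ _ (Or.inr (by simp; omega)), ?_⟩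
        exact ih j _ b (Or.inr ⟨by simp; omega, by simp; omega⟩)

lemma scc_segRow (o : Tile n) :
    ∀ (d : ℕ) (B : Board n c) (i j : Fin n), (j:ℕ) + d < n → SameColorConn B o (i, j) →
      ∃ ms : List (Fin c), ms.length = d ∧
        ∀ u : Fin n, (j:ℕ) ≤ u → (u:ℕ) ≤ (j:ℕ) + d →
          SameColorConn (playMoves o B ms) o (i, u) := by
  intro d
  induction d with
  | zero =>
    intro B i j _ hij
    refine ⟨[], rfl, fun u h1 h2 => ?_⟩
    have : u = j := by apply Fin.ext; omega
    exact this ▸ hij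
  | succ d ih =>
    intro B i j hlt hij
    obtain ⟨ms, hlen, hcov⟩ := ih B i j (by omega) hij
    set B₁ := playMoves o B ms with hB₁
    have hq : SameColorConn
        (flood B₁ o (B₁ (i, ⟨(j:ℕ) + d + 1, by omega⟩))) o (i, ⟨(j:ℕ) + d + 1, by omega⟩) := by
      refine scc_absorb (hcov ⟨(j:ℕ)+d, by omega⟩ (by simp) (by simp)) ?_
      exact adjT_horiz i _ _ (Or.inl rfl)
    refine ⟨ms ++ [B₁ (i, ⟨(j:ℕ) + d + 1, by omega⟩)], by simp [hlen], fun u h1 h2 => ?_⟩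
    rw [playMoves_append, ← hB₁]
    show SameColorConn (flood B₁ o _) o (i, u)
    by_cases hu : (u:ℕ) = (j:ℕ) + d + 1
    · have : u = (⟨(j:ℕ) + d + 1, by omega⟩ : Fin n) := by apply Fin.ext; simpa using hu
      rw [this]; exact hq
    · exact scc_mono _ (hcov u h1 (by omega))

lemma scc_segCol (o : Tile n) :
    ∀ (d : ℕ) (B : Board n c) (i j : Fin n), (i:ℕ) + d < n → SameColorConn B o (i, j) →
      ∃ ms : List (Fin c), ms.length = d ∧
        ∀ u : Fin n, (i:ℕ) ≤ u → (u:ℕ) ≤ (i:ℕ) + d →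
          SameColorConn (playMoves o B ms) o (u, j) := by
  intro d
  induction d with
  | zero =>
    intro B i j _ hij
    refine ⟨[], rfl, fun u h1 h2 => ?_⟩
    have : u = i := by apply Fin.ext; omega
    exact this ▸ hij
  | succ d ih =>
    intro B i j hlt hij
    obtain ⟨ms, hlen, hcov⟩ := ih B i j (by omega) hij
    set B₁ := playMoves o B ms with hB₁
    have hq : SameColorConn
        (flood B₁ o (B₁ (⟨(i:ℕ) + d + 1, by omega⟩, j))) o (⟨(i:ℕ) + d + 1, by omega⟩, j) := by
      refine scc_absorb (hcov ⟨(i:ℕ)+d, by omega⟩ (by simp) (by simp)) ?_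
      exact adjT_vert j _ _ (Or.inl rfl)
    refine ⟨ms ++ [B₁ (⟨(i:ℕ) + d + 1, by omega⟩, j)], by simp [hlen], fun u h1 h2 => ?_⟩
    rw [playMoves_append, ← hB₁]
    show SameColorConn (flood B₁ o _) o (u, j)
    by_cases hu : (u:ℕ) = (i:ℕ) + d + 1
    · have : u = (⟨(i:ℕ) + d + 1, by omega⟩ : Fin n) := by apply Fin.ext; simpa using hu
      rw [this]; exact hq
    · exact scc_mono _ (hcov u h1 (by omega))

end Aux

lemma flood_strategy (n c k : ℕ) (hn : 1 ≤ n) (hc : 1 ≤ c) (hk : 1 ≤ k) (B : Board n c) :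
    ∃ ms : List (Fin c),
      ms.length = (n-1) + ((n-1)/k + 1) * (n-1) + (k/2) * c ∧
      Flooded (playMoves ((⟨0, hn⟩ : Fin n), (⟨0, hn⟩ : Fin n)) B ms) := by
  set o : Tile n := ((⟨0, hn⟩ : Fin n), (⟨0, hn⟩ : Fin n)) with ho
  -- Phase 1 : flood the first column
  obtain ⟨ms₁, hlen₁, hcov₁⟩ := scc_segCol o (n-1) B ⟨0, hn⟩ ⟨0, hn⟩
    (show (0:ℕ) + (n-1) < n by omega) (Relation.ReflTransGen.refl)
  set B₁ := playMoves o B ms₁ with hB₁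
  have hcol : ∀ t : Fin n, SameColorConn B₁ o (t, ⟨0, hn⟩) := fun t =>
    hcov₁ t (Nat.zero_le _) (show (t:ℕ) ≤ 0 + (n-1) by omega)
  -- Phase 2 : flood a list of selected rows
  have rows : ∀ (l : List (Fin n)) (B' : Board n c),
      (∀ t : Fin n, SameColorConn B' o (t, ⟨0, hn⟩)) →
      ∃ ms : List (Fin c), ms.length = l.length * (n-1) ∧
        (∀ t : Fin n, SameColorConn (playMoves o B' ms) o (t, ⟨0, hn⟩)) ∧
        (∀ r ∈ l, ∀ u : Fin n, SameColorConn (playMoves o B' ms) o (r, u)) := by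
    intro l
    induction l with
    | nil => intro B' h; exact ⟨[], by simp, h, by simp⟩
    | cons r l ih =>
      intro B' h
      obtain ⟨msr, hlenr, hcovr⟩ := scc_segRow o (n-1) B' r ⟨0, hn⟩
        (show (0:ℕ) + (n-1) < n by omega) (h r)
      obtain ⟨ms', hlen', hcol', hcov'⟩ := ih (playMoves o B' msr)
        (fun t => scc_mono_play _ (h t))
      refine ⟨msr ++ ms', by simp [hlenr, hlen', Nat.succ_mul, Nat.add_comm], ?_, ?_⟩
      · intro t; rw [playMoves_append]; exact hcol' t
      · intro r' hr' u
        rw [playMoves_append]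
        rcases List.mem_cons.mp hr' with h1 | h1
        · subst h1
          exact scc_mono_play _ (hcovr u (Nat.zero_le _) (show (u:ℕ) ≤ 0 + (n-1) by omega))
        · exact hcov' r' h1 u
  -- the selected rows
  set l : List (Fin n) :=
    (List.range ((n-1)/k + 1)).map
      (fun j => (⟨min (k*j + k/2) (n-1), by omega⟩ : Fin n)) with hl
  obtain ⟨ms₂, hlen₂, _, hcov₂⟩ := rows l B₁ hcol
  set B₂ := playMoves o B₁ ms₂ with hB₂
  -- Phase 3 : k/2 colour cycles
  obtain ⟨ms₃, hlen₃, hcov₃⟩ := scc_ball o (by omega) (k/2) B₂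
  refine ⟨ms₁ ++ (ms₂ ++ ms₃), ?_, ?_⟩
  · simp only [List.length_append, hlen₁, hlen₂, hlen₃, hl, List.length_map, List.length_range]
    omega
  · have hall : ∀ q : Tile n, SameColorConn (playMoves o B₂ ms₃) o q := by
      rintro ⟨i, u⟩
      -- the selected row nearest to i
      set a := k * ((i:ℕ)/k) with ha
      have hdm : k * ((i:ℕ)/k) + (i:ℕ) % k = (i:ℕ) := Nat.div_add_mod (i:ℕ) k
      have hml : (i:ℕ) % k < k := Nat.mod_lt _ (by omega)
      set r : Fin n := ⟨min (a + k/2) (n-1), by omega⟩ with hr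
      have hrl : r ∈ l := by
        rw [hl]
        refine List.mem_map.mpr ⟨(i:ℕ)/k, List.mem_range.mpr ?_, rfl⟩
        have : (i:ℕ)/k ≤ (n-1)/k := Nat.div_le_div_right (by omega)
        omega
      have hin : (i:ℕ) ≤ n - 1 := by omega
      refine hcov₃ (i, u) ⟨(r, u), hcov₂ r hrl u, ?_⟩
      refine near_vert (k/2) u r i ?_
      have hrv : (r:ℕ) = min (a + k/2) (n-1) := rfl
      omega
    intro p q
    have hone : ∀ p : Tile n,
        playMoves o B (ms₁ ++ (ms₂ ++ ms₃)) p = playMoves o B (ms₁ ++ (ms₂ ++ ms₃)) o := by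
      intro p
      rw [playMoves_append, playMoves_append, ← hB₁, ← hB₂]
      exact (scc_color (hall p)).symm
    rw [hone p, hone q]

theorem stmt10_aux (n c : ℕ) (hn : 1 ≤ n) (hc : 2 ≤ c) (hcn : c ≤ n ^ 2) (B : Board n c) :
    (floodMoves B (⟨0, hn⟩, ⟨0, hn⟩) : ℝ) ≤ 2 * n + Real.sqrt (2 * c) * n + c := by
  set s : ℝ := Real.sqrt (2 * c) with hs
  have hcp : (0:ℝ) < c := by exact_mod_cast Nat.lt_of_lt_of_le Nat.zero_lt_two hc
  have hsp : 0 < s := Real.sqrt_pos.mpr (by linarith)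
  have hs2 : s * s = 2 * c := Real.mul_self_sqrt (by linarith)
  have hnp : (0:ℝ) < n := by exact_mod_cast hn
  have hn1 : (0:ℝ) ≤ (n:ℝ) - 1 := by
    have : (1:ℝ) ≤ n := by exact_mod_cast hn
    linarith
  set k : ℕ := ⌈(2 * (n:ℝ)) / s⌉₊ with hk
  have hk1 : 1 ≤ k := Nat.one_le_iff_ne_zero.mpr (by
    intro h0
    have hpos : (0:ℝ) < 2 * (n:ℝ) / s := by positivity
    have := Nat.ceil_pos.mpr hpos
    omega)
  have hkl : (2 * (n:ℝ)) / s ≤ (k:ℝ) := Nat.le_ceil _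
  have hku : (k:ℝ) < (2 * (n:ℝ)) / s + 1 := Nat.ceil_lt_add_one (by positivity)
  have hkp : (0:ℝ) < k := by exact_mod_cast hk1
  obtain ⟨ms, hlen, hfl⟩ := flood_strategy n c k hn (by omega) hk1 B
  have h1 : floodMoves B (⟨0, hn⟩, ⟨0, hn⟩) ≤ ms.length := Nat.sInf_le ⟨ms, rfl, hfl⟩
  have h2 : (floodMoves B (⟨0, hn⟩, ⟨0, hn⟩) : ℝ) ≤ (ms.length : ℝ) := by exact_mod_cast h1
  refine h2.trans ?_
  rw [hlen]
  have hd1 : ((((n-1)/k : ℕ)) : ℝ) ≤ ((n:ℝ) - 1) / k := by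
    calc ((((n-1)/k : ℕ)) : ℝ) ≤ ((n-1 : ℕ) : ℝ) / (k:ℝ) := Nat.cast_div_le
    _ = ((n:ℝ) - 1)/k := by rw [Nat.cast_sub hn]; norm_num
  have hd2 : (((k/2 : ℕ)) : ℝ) ≤ (k:ℝ) / 2 := by
    calc (((k/2 : ℕ)) : ℝ) ≤ (k:ℝ) / ((2:ℕ):ℝ) := Nat.cast_div_le
    _ = (k:ℝ)/2 := by norm_num
  have hA : ((n:ℝ) - 1)/k ≤ s/2 := by
    rw [div_le_iff₀ hkp]
    have h2n : 2 * (n:ℝ) ≤ (k:ℝ) * s := by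
      rw [div_le_iff₀ hsp] at hkl
      linarith
    nlinarith
  have hB : ((k:ℝ)/2) * c ≤ s * n / 2 + c/2 := by
    have h3 : (k:ℝ) * s < 2 * n + s := by
      have h4 := mul_lt_mul_of_pos_right hku hsp
      rw [add_mul, div_mul_cancel₀ _ (ne_of_gt hsp)] at h4
      linarith
    nlinarith [mul_lt_mul_of_pos_right h3 hsp]
  have hA2 : ((((n-1)/k : ℕ)) : ℝ) ≤ s/2 := hd1.trans hA
  have hBc : (((k/2 : ℕ)) : ℝ) * c ≤ s * n / 2 + c/2 :=
    le_trans (mul_le_mul_of_nonneg_right hd2 hcp.le) hB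
  have hcast : (((n-1) + ((n-1)/k + 1) * (n-1) + (k/2) * c : ℕ) : ℝ)
      = ((n:ℝ) - 1) + ((((n-1)/k : ℕ):ℝ) + 1) * ((n:ℝ) - 1) + (((k/2 : ℕ):ℝ)) * c := by
    push_cast [Nat.cast_sub hn]
    ring
  rw [hcast]
  have key : ((((n-1)/k : ℕ):ℝ) + 1) * ((n:ℝ) - 1) ≤ (s/2 + 1) * ((n:ℝ) - 1) :=
    mul_le_mul_of_nonneg_right (by linarith) hn1
  nlinarith [key, hBc, hsp.le, hnp, hcp]

/-- any n×n board with c colours (2 ≤ c ≤ n²) can be flooded in at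
most 2n + √(2c)·n + c moves. -/
theorem stmt10 (n c : ℕ) (hn : 1 ≤ n) (hc : 2 ≤ c) (hcn : c ≤ n ^ 2) (B : Board n c) :
    (floodMoves B (⟨0, hn⟩, ⟨0, hn⟩) : ℝ) ≤ 2 * n + Real.sqrt (2 * c) * n + c := stmt10_aux n c hn hc hcn B
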